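/- For every integer m ≥ 4 there exists a constant C = C(m) > 0 such that for every odd prime power q and every r ∈ F_q^*, the number N_r(m,q) of Diophantine m-tuples in F_q with shift r satisfies |N_r(m,q) − 2^{−m(m−1)/2} q^m| ≤ C q^{m−1/2}. -/

import Mathlib

open Finset

section QC
variable {F : Type} [Field F] [Fintype F] [DecidableEq F]

noncomputable def qc (F : Type) [Field F] [Fintype F] [DecidableEq F] : F → ℝ :=
  fun t => ((quadraticChar F t : ℤ) : ℝ)

lemma qc_mul (a b : F) : qc F (a * b) = qc F a * qc F b := by
  simp [qc, map_mul]

lemma qc_zero : qc F 0 = 0 := by simp [qc]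

lemma qc_abs_le (t : F) : |qc F t| ≤ 1 := by
  rcases eq_or_ne t 0 with h | h
  · simp [h, qc]
  · rcases quadraticChar_dichotomy h with h' | h' <;> simp [qc, h']

lemma qc_sq_one {t : F} (h : t ≠ 0) : qc F t ^ 2 = 1 := by
  have := quadraticChar_sq_one h
  have : (quadraticChar F t : ℤ) ^ 2 = 1 := by exact_mod_cast this
  unfold qc
  exact_mod_cast this

lemma qc_sq_one' {t : F} (h : t ≠ 0) : qc F (t ^ 2) = 1 := by
  have := quadraticChar_sq_one' h
  unfold qc
  rw [this]; norm_num

lemma qc_sum_zero (h2 : ringChar F ≠ 2) : ∑ t : F, qc F t = 0 := by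
  unfold qc
  rw [← Int.cast_sum]
  rw [quadraticChar_sum_zero h2]
  norm_num

lemma qc_affine_sum {y : F} (hy : y ≠ 0) (s : F) (h2 : ringChar F ≠ 2) :
    ∑ b : F, qc F (y * b + s) = 0 := by
  have : ∑ b : F, qc F (y * b + s) = ∑ t : F, qc F t := by
    apply Finset.sum_nbij' (fun b => y * b + s) (fun t => (t - s) / y)
    · intro a _; exact mem_univ _
    · intro a _; exact mem_univ _
    · intro a _; field_simp; ring
    · intro a _; field_simp; ring
    · intro a _; rfl
  rw [this, qc_sum_zero h2]

/-- Key quadratic character sum: `∑_b χ((b+u)(b+v)) = -1` for `u ≠ v`. -/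
lemma qc_quad_sum (h2 : ringChar F ≠ 2) {u v : F} (huv : u ≠ v) :
    ∑ b : F, qc F ((b + u) * (b + v)) = -1 := by
  have hw : v - u ≠ 0 := sub_ne_zero.mpr (Ne.symm huv)
  set w := v - u with hwdef
  -- shift b ↦ b - u
  have h1 : ∑ b : F, qc F ((b + u) * (b + v)) = ∑ b : F, qc F (b * (b + w)) := by
    apply Finset.sum_nbij' (fun b => b + u) (fun b => b - u)
    · intro a _; exact mem_univ _
    · intro a _; exact mem_univ _
    · intro a _; ring
    · intro a _; ring
    · intro a _; congr 1; ring
  rw [h1]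
  -- drop b = 0 term
  rw [← Finset.sum_erase_add _ _ (mem_univ (0:F))]
  rw [show qc F ((0:F) * (0 + w)) = 0 by rw [zero_mul, qc_zero]]
  rw [add_zero]
  -- for b ≠ 0, qc (b*(b+w)) = qc (1 + w/b)
  have h2' : ∀ b ∈ (univ : Finset F).erase 0, qc F (b * (b + w)) = qc F (1 + w / b) := by
    intro b hb
    have hb0 : b ≠ 0 := (Finset.mem_erase.mp hb).1
    have : b * (b + w) = b ^ 2 * (1 + w / b) := by field_simp
    rw [this, qc_mul, qc_sq_one' hb0, one_mul]
  rw [Finset.sum_congr rfl h2']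
  -- bijection b ↦ 1 + w/b from F\{0} to F\{1}
  have h3 : ∑ b ∈ (univ : Finset F).erase 0, qc F (1 + w / b)
      = ∑ t ∈ (univ : Finset F).erase 1, qc F t := by
    apply Finset.sum_nbij' (fun b => 1 + w / b) (fun t => w / (t - 1))
    · intro a ha
      have ha0 : a ≠ 0 := (Finset.mem_erase.mp ha).1
      refine Finset.mem_erase.mpr ⟨?_, mem_univ _⟩
      intro h
      have : w / a = 0 := by linear_combination h
      exact hw (by field_simp at this; simpa using this)
    · intro t ht
      have ht1 : t ≠ 1 := (Finset.mem_erase.mp ht).1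
      refine Finset.mem_erase.mpr ⟨?_, mem_univ _⟩
      have : t - 1 ≠ 0 := sub_ne_zero.mpr ht1
      exact div_ne_zero hw this
    · intro a ha
      have ha0 : a ≠ 0 := (Finset.mem_erase.mp ha).1
      field_simp
      simp [hw]
    · intro t ht
      have ht1 : t ≠ 1 := (Finset.mem_erase.mp ht).1
      have h1 : t - 1 ≠ 0 := sub_ne_zero.mpr ht1
      field_simp
      ring
    · intro a _; rfl
  rw [h3]
  have h4 : ∑ t ∈ (univ : Finset F).erase 1, qc F t = (∑ t : F, qc F t) - qc F 1 :=
    (Finset.sum_erase_eq_sub (mem_univ _))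
  rw [h4, qc_sum_zero h2]
  simp [qc]

/-- Off-diagonal bound for `S(x,y) = ∑_b χ((xb+r)(yb+r))`. -/
lemma qc_S_offdiag (h2 : ringChar F ≠ 2) {r : F} (hr : r ≠ 0) {x y : F} (hxy : x ≠ y) :
    |∑ b : F, qc F ((x * b + r) * (y * b + r))| ≤ 1 := by
  rcases eq_or_ne x 0 with hx | hx
  · -- x = 0 : sum is qc r * ∑ qc (y b + r) = 0
    have hy : y ≠ 0 := by rintro rfl; exact hxy (hx.trans rfl)
    have : ∑ b : F, qc F ((x * b + r) * (y * b + r))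
        = qc F r * ∑ b : F, qc F (y * b + r) := by
      rw [Finset.mul_sum]
      refine Finset.sum_congr rfl fun b _ => ?_
      rw [hx, zero_mul, zero_add, qc_mul]
    rw [this, qc_affine_sum hy r h2, mul_zero]; norm_num
  rcases eq_or_ne y 0 with hy | hy
  · have : ∑ b : F, qc F ((x * b + r) * (y * b + r))
        = qc F r * ∑ b : F, qc F (x * b + r) := by
      rw [Finset.mul_sum]
      refine Finset.sum_congr rfl fun b _ => ?_
      rw [hy, zero_mul, zero_add, qc_mul, mul_comm]
    rw [this, qc_affine_sum hx r h2, mul_zero]; norm_num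
  · -- both nonzero
    have huv : r / x ≠ r / y := by
      intro h
      apply hxy
      have hx' : r / (r / x) = x := by field_simp
      have hy' : r / (r / y) = y := by field_simp
      rw [← hx', h, hy']
    have key : ∀ b : F, (x * b + r) * (y * b + r) = (x * y) * ((b + r / x) * (b + r / y)) := by
      intro b; field_simp
    have : ∑ b : F, qc F ((x * b + r) * (y * b + r))
        = qc F (x * y) * ∑ b : F, qc F ((b + r / x) * (b + r / y)) := by
      rw [Finset.mul_sum]
      exact Finset.sum_congr rfl fun b _ => by rw [key b, qc_mul]
    rw [this, qc_quad_sum h2 huv]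
    rw [abs_mul]
    calc |qc F (x*y)| * |(-1 : ℝ)| ≤ 1 * 1 := by
          apply mul_le_mul (qc_abs_le _) (by norm_num) (abs_nonneg _) zero_le_one
      _ = 1 := by norm_num
lemma qc_moment (h2 : ringChar F ≠ 2) {r : F} (hr : r ≠ 0)
    {ι : Type} [Fintype ι] [DecidableEq ι] (s : Finset ι) (hs : s.Nonempty) :
    ∑ a : ι → F, (∑ x : F, ∏ j ∈ s, qc F (x * a j + r)) ^ 2
      ≤ 2 * (Fintype.card F : ℝ) ^ (Fintype.card ι + 1) := by
  set q : ℝ := (Fintype.card F : ℝ) with hq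
  have hq0 : (0:ℝ) ≤ q := by positivity
  have hq1 : 1 ≤ q := by
    rw [hq]; exact_mod_cast Fintype.card_pos
  set n := Fintype.card ι with hn
  set d := s.card with hd
  have hd1 : 1 ≤ d := hs.card_pos
  have hdn : d ≤ n := by
    rw [hd, hn, ← Finset.card_univ]; exact card_le_card (subset_univ s)
  have hn1 : 1 ≤ n := le_trans hd1 hdn
  set S : F → F → ℝ := fun x y => ∑ b : F, qc F ((x * b + r) * (y * b + r)) with hS
  have key : ∑ a : ι → F, (∑ x : F, ∏ j ∈ s, qc F (x * a j + r)) ^ 2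
      = ∑ x : F, ∑ y : F, S x y ^ d * q ^ (n - d) := by
    have e1 : ∀ a : ι → F, (∑ x : F, ∏ j ∈ s, qc F (x * a j + r)) ^ 2
        = ∑ x : F, ∑ y : F, ∏ j ∈ s, qc F ((x * a j + r) * (y * a j + r)) := by
      intro a
      rw [sq, Finset.sum_mul_sum]
      refine sum_congr rfl fun x _ => sum_congr rfl fun y _ => ?_
      rw [← Finset.prod_mul_distrib]
      exact prod_congr rfl fun j _ => (qc_mul _ _).symm
    rw [Finset.sum_congr rfl fun a _ => e1 a]
    rw [Finset.sum_comm]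
    refine sum_congr rfl fun x _ => ?_
    rw [Finset.sum_comm]
    refine sum_congr rfl fun y _ => ?_
    -- inner sum over a
    have hfil : (univ : Finset ι).filter (fun j => j ∈ s) = s := by
      ext j; simp
    have e2 : ∀ a : ι → F, ∏ j ∈ s, qc F ((x * a j + r) * (y * a j + r))
        = ∏ j : ι, (fun j t => if j ∈ s then qc F ((x * t + r) * (y * t + r)) else 1) j (a j) := by
      intro a
      conv_lhs => rw [← hfil]
      rw [Finset.prod_filter]
    rw [Finset.sum_congr rfl fun a _ => e2 a]
    have e4 : ∏ j : ι, ∑ t : F, (fun j t =>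
          if j ∈ s then qc F ((x * t + r) * (y * t + r)) else 1) j t
        = S x y ^ d * q ^ (n - d) := by
      have e3 : ∀ j : ι, (∑ t : F, if j ∈ s then qc F ((x * t + r) * (y * t + r)) else 1)
          = if j ∈ s then S x y else q := by
        intro j
        by_cases hj : j ∈ s <;> simp [hj, hS, hq, Finset.card_univ]
      rw [Finset.prod_congr rfl fun j _ => e3 j]
      rw [Finset.prod_ite]
      rw [hfil]
      rw [Finset.prod_const, Finset.prod_const]
      congr 1
      rw [Finset.filter_not, hfil]
      rw [Finset.card_sdiff_of_subset (subset_univ s), Finset.card_univ]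
    exact (Fintype.prod_sum (fun j t =>
      if j ∈ s then qc F ((x * t + r) * (y * t + r)) else 1)).symm.trans e4
  rw [key]
  -- now bound
  have hdiag : ∀ x : F, |S x x| ≤ q := by
    intro x
    calc |S x x| ≤ ∑ b : F, |qc F ((x * b + r) * (x * b + r))| := Finset.abs_sum_le_sum_abs _ _
      _ ≤ ∑ _b : F, (1:ℝ) := Finset.sum_le_sum fun b _ => qc_abs_le _
      _ = q := by rw [Finset.sum_const, Finset.card_univ, nsmul_eq_mul, mul_one, hq]
  have hrowbound : ∀ x : F, ∑ y : F, S x y ^ d * q ^ (n - d) ≤ 2 * q ^ n := by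
    intro x
    rw [← Finset.add_sum_erase _ _ (mem_univ x)]
    have t1 : S x x ^ d * q ^ (n - d) ≤ q ^ n := by
      calc S x x ^ d * q ^ (n - d) ≤ |S x x| ^ d * q ^ (n - d) := by
            apply mul_le_mul_of_nonneg_right _ (by positivity)
            calc S x x ^ d ≤ |S x x ^ d| := le_abs_self _
              _ = |S x x| ^ d := abs_pow _ _
        _ ≤ q ^ d * q ^ (n - d) := by
            apply mul_le_mul_of_nonneg_right _ (by positivity)
            exact pow_le_pow_left₀ (abs_nonneg _) (hdiag x) d
        _ = q ^ n := by rw [← pow_add]; congr 1; omega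
    have t2 : ∑ y ∈ (univ : Finset F).erase x, S x y ^ d * q ^ (n - d) ≤ q ^ n := by
      have hterm : ∀ y ∈ (univ : Finset F).erase x, S x y ^ d * q ^ (n - d) ≤ q ^ (n - 1) := by
        intro y hy
        have hxy : x ≠ y := (Finset.ne_of_mem_erase hy).symm
        have h1 : |S x y| ≤ 1 := qc_S_offdiag h2 hr hxy
        calc S x y ^ d * q ^ (n - d) ≤ |S x y| ^ d * q ^ (n - d) := by
              apply mul_le_mul_of_nonneg_right _ (by positivity)
              calc S x y ^ d ≤ |S x y ^ d| := le_abs_self _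
                _ = |S x y| ^ d := abs_pow _ _
          _ ≤ 1 ^ d * q ^ (n - d) := by
              apply mul_le_mul_of_nonneg_right _ (by positivity)
              exact pow_le_pow_left₀ (abs_nonneg _) h1 d
          _ = q ^ (n - d) := by rw [one_pow, one_mul]
          _ ≤ q ^ (n - 1) := pow_le_pow_right₀ hq1 (by omega)
      calc ∑ y ∈ (univ : Finset F).erase x, S x y ^ d * q ^ (n - d)
          ≤ ∑ _y ∈ (univ : Finset F).erase x, q ^ (n - 1) := Finset.sum_le_sum hterm
        _ = ((univ : Finset F).erase x).card * q ^ (n - 1) := by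
            rw [Finset.sum_const, nsmul_eq_mul]
        _ ≤ q * q ^ (n - 1) := by
            apply mul_le_mul_of_nonneg_right _ (by positivity)
            rw [hq]
            exact_mod_cast Finset.card_le_card (Finset.erase_subset _ _) |>.trans
              (le_of_eq Finset.card_univ)
        _ = q ^ n := by rw [← pow_succ']; congr 1; omega
    linarith
  calc ∑ x : F, ∑ y : F, S x y ^ d * q ^ (n - d) ≤ ∑ _x : F, 2 * q ^ n :=
        Finset.sum_le_sum fun x _ => hrowbound x
    _ = q * (2 * q ^ n) := by rw [Finset.sum_const, Finset.card_univ, nsmul_eq_mul, hq]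
    _ = 2 * q ^ (n + 1) := by ring
lemma graph_bound {m : ℕ} (h2 : ringChar F ≠ 2) {r : F} (hr : r ≠ 0)
    (S : Finset (Fin m × Fin m)) (hS : S.Nonempty) (hlt : ∀ e ∈ S, e.1 < e.2) :
    (Fintype.card F : ℝ) * |∑ a : Fin m → F, ∏ e ∈ S, qc F (a e.1 * a e.2 + r)|
      ≤ 2 * (Fintype.card F : ℝ) ^ m * Real.sqrt (Fintype.card F) := by
  obtain ⟨e0, he0⟩ := hS
  set q : ℝ := (Fintype.card F : ℝ) with hq
  have hq0 : (0:ℝ) < q := by rw [hq]; exact_mod_cast Fintype.card_pos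
  set i := e0.1 with hi
  set inc : Fin m × Fin m → Prop := fun e => e.1 = i ∨ e.2 = i with hinc
  set o : Fin m × Fin m → Fin m := fun e => if e.1 = i then e.2 else e.1 with ho
  set Nbr : Finset (Fin m) := (S.filter inc).image o with hNbr
  set f : (Fin m → F) → ℝ := fun a => ∏ e ∈ S, qc F (a e.1 * a e.2 + r) with hf
  -- basic facts about incident edges and "other endpoint"
  have hmem : ∀ e ∈ S.filter inc, (e.1 = i ∧ e.2 ≠ i ∧ o e = e.2) ∨
      (e.1 ≠ i ∧ e.2 = i ∧ o e = e.1) := by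
    intro e he
    obtain ⟨heS, hei⟩ := Finset.mem_filter.mp he
    have hlt' := hlt e heS
    rcases eq_or_ne e.1 i with h1 | h1
    · left
      refine ⟨h1, ?_, ?_⟩
      · rw [h1] at hlt'; exact hlt'.ne'
      · simp [ho, h1]
    · right
      rcases hei with h' | h2
      · exact absurd h' h1
      · exact ⟨h1, h2, by simp [ho, h1]⟩
  have hinj : ∀ e₁ ∈ S.filter inc, ∀ e₂ ∈ S.filter inc, o e₁ = o e₂ → e₁ = e₂ := by
    intro e₁ he₁ e₂ he₂ hoe
    rcases hmem e₁ he₁ with ⟨a1, b1, c1⟩ | ⟨a1, b1, c1⟩ <;>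
      rcases hmem e₂ he₂ with ⟨a2, b2, c2⟩ | ⟨a2, b2, c2⟩
    · exact Prod.ext (a1.trans a2.symm) (c1.symm.trans (hoe.trans c2))
    · exfalso
      have l1 := hlt e₁ (Finset.mem_filter.mp he₁).1
      have l2 := hlt e₂ (Finset.mem_filter.mp he₂).1
      rw [a1] at l1
      rw [b2] at l2
      have h12 : e₁.2 = e₂.1 := c1.symm.trans (hoe.trans c2)
      rw [h12] at l1
      exact absurd (l1.trans l2) (lt_irrefl _)
    · exfalso
      have l1 := hlt e₁ (Finset.mem_filter.mp he₁).1
      have l2 := hlt e₂ (Finset.mem_filter.mp he₂).1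
      rw [b1] at l1
      rw [a2] at l2
      have h12 : e₁.1 = e₂.2 := c1.symm.trans (hoe.trans c2)
      rw [h12] at l1
      exact absurd (l2.trans l1) (lt_irrefl _)
    · exact Prod.ext (c1.symm.trans (hoe.trans c2)) (b1.trans b2.symm)
  have hNne : Nbr.Nonempty := by
    refine ⟨o e0, Finset.mem_image.mpr ⟨e0, ?_, rfl⟩⟩
    exact Finset.mem_filter.mpr ⟨he0, Or.inl rfl⟩
  set T : (Fin m → F) → ℝ := fun a => ∑ x : F, ∏ j ∈ Nbr, qc F (x * a j + r) with hT
  set R : (Fin m → F) → ℝ :=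
    fun a => ∏ e ∈ S.filter (fun e => ¬ inc e), qc F (a e.1 * a e.2 + r) with hR
  have hinvol : Function.Involutive
      (fun p : (Fin m → F) × F => (Function.update p.1 i p.2, p.1 i)) := by
    intro p
    simp [Function.update_idem, Function.update_eq_self, Function.update_self]
  have step1 : ∑ p : (Fin m → F) × F, f (Function.update p.1 i p.2)
      = q * ∑ a : Fin m → F, f a := by
    have hcomp := Equiv.sum_comp (Function.Involutive.toPerm _ hinvol)
      (fun p : (Fin m → F) × F => f p.1)
    calc ∑ p : (Fin m → F) × F, f (Function.update p.1 i p.2)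
        = ∑ p : (Fin m → F) × F, f ((Function.Involutive.toPerm _ hinvol p).1) := rfl
      _ = ∑ p : (Fin m → F) × F, f p.1 := hcomp
      _ = ∑ a : Fin m → F, ∑ _x : F, f a := Fintype.sum_prod_type _
      _ = ∑ a : Fin m → F, q * f a := by
          refine sum_congr rfl fun a _ => ?_
          rw [Finset.sum_const, Finset.card_univ, nsmul_eq_mul, hq]
      _ = q * ∑ a : Fin m → F, f a := by rw [← Finset.mul_sum]
  have split : ∀ (a : Fin m → F) (x : F),
      f (Function.update a i x) = R a * ∏ j ∈ Nbr, qc F (x * a j + r) := by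
    intro a x
    rw [hf]
    simp only []
    rw [← Finset.prod_filter_mul_prod_filter_not S inc, mul_comm]
    congr 1
    · rw [hR]
      refine Finset.prod_congr rfl fun e he => ?_
      obtain ⟨_, hni⟩ := Finset.mem_filter.mp he
      obtain ⟨h1, h2⟩ := not_or.mp hni
      rw [Function.update_of_ne h1, Function.update_of_ne h2]
    · rw [hNbr, Finset.prod_image hinj]
      refine Finset.prod_congr rfl fun e he => ?_
      rcases hmem e he with ⟨h1, h2, h3⟩ | ⟨h1, h2, h3⟩
      · rw [h3, h1, Function.update_self, Function.update_of_ne h2]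
      · rw [h3, h2, Function.update_self, Function.update_of_ne h1, mul_comm (a e.1) x]
  have hR1 : ∀ a : Fin m → F, |R a| ≤ 1 := by
    intro a
    rw [hR]
    simp only []
    rw [Finset.abs_prod]
    apply Finset.prod_le_one (fun e _ => abs_nonneg _) (fun e _ => qc_abs_le _)
  -- Cauchy-Schwarz and the moment bound
  have hm2 : ∑ a : Fin m → F, T a ^ 2 ≤ 2 * q ^ (m + 1) := by
    have := qc_moment h2 hr Nbr hNne
    rwa [Fintype.card_fin] at this
  have hcardfun : ((Fintype.card (Fin m → F) : ℕ) : ℝ) = q ^ m := by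
    rw [Fintype.card_fun, Fintype.card_fin, hq]
    push_cast
    ring
  have hTsum : ∑ a : Fin m → F, |T a| ≤ 2 * q ^ m * Real.sqrt q := by
    have hcs : (∑ a : Fin m → F, |T a|) ^ 2
        ≤ (Fintype.card (Fin m → F) : ℝ) * ∑ a : Fin m → F, |T a| ^ 2 := by
      have := sq_sum_le_card_mul_sum_sq (s := (univ : Finset (Fin m → F)))
        (f := fun a => |T a|)
      rwa [Finset.card_univ] at this
    have habs : ∑ a : Fin m → F, |T a| ^ 2 = ∑ a : Fin m → F, T a ^ 2 := by
      simp [sq_abs]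
    rw [habs, hcardfun] at hcs
    have hcs2 : (∑ a : Fin m → F, |T a|) ^ 2 ≤ (2 * q ^ m * Real.sqrt q) ^ 2 := by
      calc (∑ a : Fin m → F, |T a|) ^ 2 ≤ q ^ m * (2 * q ^ (m + 1)) := by
            refine hcs.trans ?_
            apply mul_le_mul_of_nonneg_left hm2 (by positivity)
        _ ≤ (2 * q ^ m * Real.sqrt q) ^ 2 := by
            rw [mul_pow, mul_pow, Real.sq_sqrt hq0.le]
            calc q ^ m * (2 * q ^ (m + 1)) = 2 * (q^m * q^(m+1)) := by ring
              _ = 2 * (q ^ m) ^ 2 * q := by rw [← pow_add]; rw [show m + (m+1) = m + m + 1 by ring]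
                                            rw [pow_succ, ← two_mul, pow_mul']
                                            ring
              _ ≤ 2 ^ 2 * (q ^ m) ^ 2 * q := by nlinarith [pow_pos hq0 m, pow_pos hq0 (2*m)]
    calc ∑ a : Fin m → F, |T a| = Real.sqrt ((∑ a : Fin m → F, |T a|) ^ 2) := by
          rw [Real.sqrt_sq (Finset.sum_nonneg fun a _ => abs_nonneg _)]
      _ ≤ Real.sqrt ((2 * q ^ m * Real.sqrt q) ^ 2) := Real.sqrt_le_sqrt hcs2
      _ = 2 * q ^ m * Real.sqrt q := Real.sqrt_sq (by positivity)
  calc q * |∑ a : Fin m → F, f a| = |q * ∑ a : Fin m → F, f a| := by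
        rw [abs_mul, abs_of_pos hq0]
    _ = |∑ p : (Fin m → F) × F, f (Function.update p.1 i p.2)| := by rw [step1]
    _ = |∑ a : Fin m → F, R a * T a| := by
        rw [Fintype.sum_prod_type]
        congr 1
        refine sum_congr rfl fun a _ => ?_
        rw [Finset.sum_congr rfl fun x _ => split a x, ← Finset.mul_sum]
    _ ≤ ∑ a : Fin m → F, |R a * T a| := Finset.abs_sum_le_sum_abs _ _
    _ ≤ ∑ a : Fin m → F, |T a| := by
        refine Finset.sum_le_sum fun a _ => ?_
        rw [abs_mul]
        exact mul_le_of_le_one_left (abs_nonneg _) (hR1 a)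
    _ ≤ 2 * q ^ m * Real.sqrt q := hTsum
lemma ind_eq {t : F} : (if IsSquare t then (1:ℝ) else 0)
    = (1 + qc F t)/2 + (if t = 0 then (1/2:ℝ) else 0) := by
  rcases eq_or_ne t 0 with h | h
  · rw [h]
    rw [if_pos (IsSquare.zero), if_pos rfl, qc_zero]
    norm_num
  · rw [if_neg h]
    by_cases hs : IsSquare t
    · have h1 : qc F t = 1 := by
        unfold qc
        rw [(quadraticChar_one_iff_isSquare h).mpr hs]
        norm_num
      rw [if_pos hs, h1]
      norm_num
    · have h1 : qc F t = -1 := by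
        unfold qc
        rw [quadraticChar_neg_one_iff_not_isSquare.mpr hs]
        norm_num
      rw [if_neg hs, h1]
      norm_num

lemma zero_count {m : ℕ} {r : F} (hr : r ≠ 0) {i j : Fin m} (hij : i ≠ j) :
    (Fintype.card F : ℝ) * ∑ a : Fin m → F, (if a i * a j + r = 0 then (1:ℝ) else 0)
      ≤ (Fintype.card F : ℝ) ^ m := by
  set q : ℝ := (Fintype.card F : ℝ) with hq
  set g : (Fin m → F) → ℝ := fun a => if a i * a j + r = 0 then (1:ℝ) else 0 with hg
  have hinvol : Function.Involutive
      (fun p : (Fin m → F) × F => (Function.update p.1 j p.2, p.1 j)) := by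
    intro p
    simp [Function.update_idem, Function.update_eq_self, Function.update_self]
  have step1 : ∑ p : (Fin m → F) × F, g (Function.update p.1 j p.2)
      = q * ∑ a : Fin m → F, g a := by
    have hcomp := Equiv.sum_comp (Function.Involutive.toPerm _ hinvol)
      (fun p : (Fin m → F) × F => g p.1)
    calc ∑ p : (Fin m → F) × F, g (Function.update p.1 j p.2)
        = ∑ p : (Fin m → F) × F, g ((Function.Involutive.toPerm _ hinvol p).1) := rfl
      _ = ∑ p : (Fin m → F) × F, g p.1 := hcomp
      _ = ∑ a : Fin m → F, ∑ _x : F, g a := Fintype.sum_prod_type _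
      _ = ∑ a : Fin m → F, q * g a := by
          refine sum_congr rfl fun a _ => ?_
          rw [Finset.sum_const, Finset.card_univ, nsmul_eq_mul, hq]
      _ = q * ∑ a : Fin m → F, g a := by rw [← Finset.mul_sum]
  rw [← step1, Fintype.sum_prod_type]
  have inner : ∀ a : Fin m → F, ∑ x : F, g (Function.update a j x) ≤ 1 := by
    intro a
    have heq : ∀ x : F, g (Function.update a j x) = if a i * x + r = 0 then (1:ℝ) else 0 := by
      intro x
      rw [hg]
      simp only []
      rw [Function.update_of_ne hij, Function.update_self]
    rw [Finset.sum_congr rfl fun x _ => heq x]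
    rw [Finset.sum_boole]
    have hcard : ((univ : Finset F).filter (fun x => a i * x + r = 0)).card ≤ 1 := by
      apply Finset.card_le_one.mpr
      intro x hx y hy
      have hx' := (Finset.mem_filter.mp hx).2
      have hy' := (Finset.mem_filter.mp hy).2
      have hai : a i ≠ 0 := by
        intro h0
        rw [h0, zero_mul, zero_add] at hx'
        exact hr hx'
      have : a i * x = a i * y := by
        have : a i * x = -r := by linear_combination hx'
        have h2 : a i * y = -r := by linear_combination hy'
        rw [this, h2]
      exact mul_left_cancel₀ hai this
    exact_mod_cast hcard
  calc ∑ a : Fin m → F, ∑ x : F, g (Function.update a j x)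
      ≤ ∑ _a : Fin m → F, (1:ℝ) := Finset.sum_le_sum fun a _ => inner a
    _ = (Fintype.card (Fin m → F) : ℝ) := by
        rw [Finset.sum_const, Finset.card_univ, nsmul_eq_mul, mul_one]
    _ = q ^ m := by rw [Fintype.card_fun, Fintype.card_fin, hq]; push_cast; ring

lemma edge_card (m : ℕ) :
    ((univ : Finset (Fin m × Fin m)).filter (fun e => e.1 < e.2)).card = m * (m - 1) / 2 := by
  set E := (univ : Finset (Fin m × Fin m)).filter (fun e => e.1 < e.2) with hE
  set E' := (univ : Finset (Fin m × Fin m)).filter (fun e => e.2 < e.1) with hE'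
  have hcard : E'.card = E.card := by
    apply Finset.card_bij' (fun e _ => Prod.swap e) (fun e _ => Prod.swap e)
    · intro e he
      exact Finset.mem_filter.mpr ⟨mem_univ _, (Finset.mem_filter.mp he).2⟩
    · intro e he
      exact Finset.mem_filter.mpr ⟨mem_univ _, (Finset.mem_filter.mp he).2⟩
    · intro e _; exact Prod.swap_swap e
    · intro e _; exact Prod.swap_swap e
  have hdisj : Disjoint E E' := by
    rw [Finset.disjoint_left]
    intro e he he'
    exact absurd ((Finset.mem_filter.mp he).2.trans (Finset.mem_filter.mp he').2) (lt_irrefl _)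
  have hunion : E ∪ E' = (univ : Finset (Fin m)).offDiag := by
    ext e
    simp only [hE, hE', Finset.mem_union, Finset.mem_filter, Finset.mem_offDiag, mem_univ,
      true_and]
    constructor
    · rintro (h | h)
      · exact h.ne
      · exact h.ne'
    · intro h
      exact lt_or_gt_of_ne h
  have hoff : ((univ : Finset (Fin m)).offDiag).card = m * m - m := by
    rw [Finset.offDiag_card, Finset.card_univ, Fintype.card_fin]
  have h2 : 2 * E.card = m * m - m := by
    have := Finset.card_union_of_disjoint hdisj
    rw [hunion, hoff, hcard] at this
    omega
  have hmm : m * m - m = m * (m - 1) := by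
    cases m with
    | zero => rfl
    | succ k => rw [Nat.succ_sub_one, Nat.mul_succ, Nat.add_sub_cancel]
  rw [hmm] at h2
  omega
end QC

/-- For every integer `m ≥ 4` there is a constant `C = C(m) > 0` such that for every
finite field `F` of odd cardinality `q` (an odd prime power) and every `r ∈ F^*`,
the number `N_r(m,q)` of Diophantine `m`-tuples in `F` with shift `r`
(ordered `m`-tuples `(a_1, …, a_m)` with `a_i a_j + r` a square for all `i < j`)
satisfies `|N_r(m,q) − 2^{−m(m−1)/2} q^m| ≤ C q^{m−1/2}`. -/
theorem diophantine_tuples_count_half_power (m : ℕ) (hm : 4 ≤ m) :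
    ∃ C : ℝ, 0 < C ∧
      ∀ (F : Type) [Field F] [Fintype F],
        Odd (Fintype.card F) →
        ∀ r : F, r ≠ 0 →
          |(Nat.card {a : Fin m → F //
                ∀ i j : Fin m, i < j → IsSquare (a i * a j + r)} : ℝ)
              - (Fintype.card F : ℝ) ^ m / 2 ^ (m * (m - 1) / 2)|
            ≤ C * (Fintype.card F : ℝ) ^ ((m : ℝ) - 1 / 2) := by
  classical
  refine ⟨2 ^ (m * m) + 2, by positivity, ?_⟩
  intro F _ _ hodd r hr
  letI : DecidableEq F := Classical.decEq F
  set q : ℝ := (Fintype.card F : ℝ) with hq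
  have hqnat : 1 ≤ Fintype.card F := Fintype.card_pos
  have hq0 : (0:ℝ) < q := by rw [hq]; exact_mod_cast hqnat
  have hq1 : (1:ℝ) ≤ q := by rw [hq]; exact_mod_cast hqnat
  have h2 : ringChar F ≠ 2 := by
    intro h
    have hcard := (FiniteField.even_card_iff_char_two).mp h
    rw [Nat.odd_iff] at hodd
    omega
  have hsq1 : (1:ℝ) ≤ Real.sqrt q := by
    rw [show (1:ℝ) = Real.sqrt 1 by simp]
    exact Real.sqrt_le_sqrt hq1
  have hsq0 : (0:ℝ) ≤ Real.sqrt q := Real.sqrt_nonneg _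
  set E := (univ : Finset (Fin m × Fin m)).filter (fun e => e.1 < e.2) with hE
  set K := E.card with hK
  have hKval : m * (m - 1) / 2 = K := (edge_card m).symm
  set v : (Fin m → F) → (Fin m × Fin m) → F := fun a e => a e.1 * a e.2 + r with hv
  set d : F → ℝ := fun t => if t = 0 then (1/2:ℝ) else 0 with hd
  set g : F → ℝ := fun t => (1 + qc F t)/2 with hg
  have hd01 : ∀ t : F, 0 ≤ d t ∧ d t ≤ 1 := by
    intro t; rw [hd]; dsimp only; constructor <;> split_ifs <;> norm_num
  have hg01 : ∀ t : F, 0 ≤ g t ∧ g t ≤ 1 := by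
    intro t
    obtain ⟨hl, hu⟩ := abs_le.mp (qc_abs_le t)
    rw [hg]
    dsimp only
    constructor <;> linarith
  set P : (Fin m → F) → Prop := fun a => ∀ i j : Fin m, i < j → IsSquare (a i * a j + r)
    with hP
  -- Step 0: counting as a sum over indicators
  have hcount : ((Nat.card {a : Fin m → F // P a} : ℕ) : ℝ)
      = ∑ a : Fin m → F, ∏ e ∈ E, (if IsSquare (v a e) then (1:ℝ) else 0) := by
    have h1 : Nat.card {a : Fin m → F // P a} = (univ.filter P).card := by
      rw [Nat.card_eq_fintype_card, Fintype.card_subtype]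
    rw [h1, ← Finset.sum_boole]
    refine Finset.sum_congr rfl fun a _ => ?_
    have hiff : P a ↔ ∀ e ∈ E, IsSquare (v a e) := by
      constructor
      · intro h e he
        exact h e.1 e.2 (Finset.mem_filter.mp he).2
      · intro h i j hij
        exact h (i, j) (Finset.mem_filter.mpr ⟨mem_univ _, hij⟩)
    by_cases hPa : P a
    · rw [if_pos hPa]
      exact (Finset.prod_eq_one fun e he => if_pos (hiff.mp hPa e he)).symm
    · rw [if_neg hPa]
      have : ¬ ∀ e ∈ E, IsSquare (v a e) := fun h => hPa (hiff.mpr h)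
      push_neg at this
      obtain ⟨e, heE, hens⟩ := this
      exact (Finset.prod_eq_zero heE
        (show (if IsSquare (v a e) then (1:ℝ) else 0) = 0 from if_neg hens)).symm
  set A : ℝ := ∑ a : Fin m → F, ∏ e ∈ E, g (v a e) with hA
  set G : Finset (Fin m × Fin m) → ℝ :=
    fun t => ∑ a : Fin m → F, (∏ e ∈ t, d (v a e)) * ∏ e ∈ E \ t, g (v a e) with hG
  -- Step 1: split indicators
  have hsum_eq : ∑ a : Fin m → F, ∏ e ∈ E, (if IsSquare (v a e) then (1:ℝ) else 0)
      = ∑ t ∈ E.powerset, G t := by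
    have hsplit : ∀ a : Fin m → F, ∏ e ∈ E, (if IsSquare (v a e) then (1:ℝ) else 0)
        = ∑ t ∈ E.powerset, (∏ e ∈ t, d (v a e)) * ∏ e ∈ E \ t, g (v a e) := by
      intro a
      rw [Finset.prod_congr rfl (fun e _ => @ind_eq F _ _ _ (v a e))]
      rw [Finset.prod_congr rfl (fun e (_ : e ∈ E) =>
        add_comm ((1 + qc F (v a e))/2) (if v a e = 0 then (1/2:ℝ) else 0))]
      exact Finset.prod_add _ _ E
    rw [Finset.sum_congr rfl fun a _ => hsplit a]
    rw [Finset.sum_comm]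
  have hGempty : G ∅ = A := by
    rw [hG, hA]
    refine Finset.sum_congr rfl fun a _ => ?_
    rw [Finset.prod_empty, one_mul, Finset.sdiff_empty]
  -- Step 2: bound the delta terms
  have hGbound : ∀ t ∈ E.powerset.erase ∅, |G t| ≤ q ^ m / q := by
    intro t ht
    obtain ⟨htne, htps⟩ := Finset.mem_erase.mp ht
    have htsub : t ⊆ E := Finset.mem_powerset.mp htps
    obtain ⟨e1, he1⟩ := Finset.nonempty_iff_ne_empty.mpr htne
    have hlt1 : e1.1 < e1.2 := (Finset.mem_filter.mp (htsub he1)).2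
    have habs : ∀ a : Fin m → F, |(∏ e ∈ t, d (v a e)) * ∏ e ∈ E \ t, g (v a e)|
        ≤ (if v a e1 = 0 then (1:ℝ) else 0) := by
      intro a
      rw [abs_mul]
      have h1 : |∏ e ∈ t, d (v a e)| ≤ d (v a e1) := by
        rw [Finset.abs_prod]
        rw [← Finset.mul_prod_erase _ _ he1]
        have : ∏ e ∈ t.erase e1, |d (v a e)| ≤ 1 :=
          Finset.prod_le_one (fun e _ => abs_nonneg _)
            (fun e _ => by rw [abs_of_nonneg (hd01 _).1]; exact (hd01 _).2)
        calc |d (v a e1)| * ∏ e ∈ t.erase e1, |d (v a e)|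
            ≤ |d (v a e1)| * 1 := by
              exact mul_le_mul_of_nonneg_left this (abs_nonneg _)
          _ = d (v a e1) := by rw [mul_one, abs_of_nonneg (hd01 _).1]
      have h2 : |∏ e ∈ E \ t, g (v a e)| ≤ 1 := by
        rw [Finset.abs_prod]
        exact Finset.prod_le_one (fun e _ => abs_nonneg _)
          (fun e _ => by rw [abs_of_nonneg (hg01 _).1]; exact (hg01 _).2)
      calc |∏ e ∈ t, d (v a e)| * |∏ e ∈ E \ t, g (v a e)|
          ≤ d (v a e1) * 1 := by
            apply mul_le_mul h1 h2 (abs_nonneg _) ((hd01 _).1)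
        _ = d (v a e1) := mul_one _
        _ ≤ (if v a e1 = 0 then (1:ℝ) else 0) := by
            rw [hd]; dsimp only; split_ifs <;> norm_num
    calc |G t| ≤ ∑ a : Fin m → F, |(∏ e ∈ t, d (v a e)) * ∏ e ∈ E \ t, g (v a e)| :=
          Finset.abs_sum_le_sum_abs _ _
      _ ≤ ∑ a : Fin m → F, (if v a e1 = 0 then (1:ℝ) else 0) :=
          Finset.sum_le_sum fun a _ => habs a
      _ ≤ q ^ m / q := by
          rw [le_div_iff₀ hq0, mul_comm]
          exact zero_count hr hlt1.ne
  -- Step 2': total delta bound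
  have main1 : |(∑ a : Fin m → F, ∏ e ∈ E, (if IsSquare (v a e) then (1:ℝ) else 0)) - A|
      ≤ 2 ^ K * (q ^ m / q) := by
    rw [hsum_eq, ← hGempty]
    have h0 : ∑ t ∈ E.powerset, G t - G ∅ = ∑ t ∈ E.powerset.erase ∅, G t := by
      rw [← Finset.sum_erase_add E.powerset G (Finset.empty_mem_powerset E)]
      ring
    rw [h0]
    calc |∑ t ∈ E.powerset.erase ∅, G t| ≤ ∑ t ∈ E.powerset.erase ∅, |G t| :=
          Finset.abs_sum_le_sum_abs _ _
      _ ≤ ∑ _t ∈ E.powerset.erase ∅, (q ^ m / q) := Finset.sum_le_sum hGbound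
      _ = (E.powerset.erase ∅).card * (q ^ m / q) := by
          rw [Finset.sum_const, nsmul_eq_mul]
      _ ≤ 2 ^ K * (q ^ m / q) := by
          apply mul_le_mul_of_nonneg_right _ (by positivity)
          have : (E.powerset.erase ∅).card ≤ E.powerset.card :=
            Finset.card_le_card (Finset.erase_subset _ _)
          rw [Finset.card_powerset] at this
          calc ((E.powerset.erase ∅).card : ℝ) ≤ ((2:ℕ) ^ K : ℕ) := by exact_mod_cast this
            _ = 2 ^ K := by push_cast; ring
  -- Step 3: main character sum expansion
  have main2 : |A - q ^ m / 2 ^ K| ≤ 2 * (q ^ m * Real.sqrt q / q) := by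
    set H : Finset (Fin m × Fin m) → ℝ :=
      fun t => ∑ a : Fin m → F, ∏ e ∈ t, qc F (v a e) with hH
    have hAeq : A = (∑ t ∈ E.powerset, H t) / 2 ^ K := by
      have hprod : ∀ a : Fin m → F, ∏ e ∈ E, g (v a e)
          = (∑ t ∈ E.powerset, ∏ e ∈ t, qc F (v a e)) / 2 ^ K := by
        intro a
        have h1 : ∏ e ∈ E, g (v a e) = (∏ e ∈ E, (qc F (v a e) + 1)) / 2 ^ K := by
          rw [hg]
          dsimp only
          rw [show (∏ e ∈ E, (1 + qc F (v a e)) / 2)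
              = (∏ e ∈ E, (qc F (v a e) + 1)) / ∏ _e ∈ E, (2:ℝ) by
            rw [← Finset.prod_div_distrib]
            exact Finset.prod_congr rfl fun e _ => by ring]
          rw [Finset.prod_const]
        rw [h1, Finset.prod_add]
        congr 1
        refine Finset.sum_congr rfl fun t _ => ?_
        rw [Finset.prod_const_one, mul_one]
      rw [hA, Finset.sum_congr rfl fun a _ => hprod a, ← Finset.sum_div]
      rw [Finset.sum_comm]
    have hHempty : H ∅ = q ^ m := by
      rw [hH]
      simp only [Finset.prod_empty]
      rw [Finset.sum_const, Finset.card_univ, nsmul_eq_mul, mul_one]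
      rw [Fintype.card_fun, Fintype.card_fin, hq]
      push_cast; ring
    have hHbound : ∀ t ∈ E.powerset.erase ∅, |H t| ≤ 2 * (q ^ m * Real.sqrt q / q) := by
      intro t ht
      obtain ⟨htne, htps⟩ := Finset.mem_erase.mp ht
      have htsub : t ⊆ E := Finset.mem_powerset.mp htps
      have htlt : ∀ e ∈ t, e.1 < e.2 := fun e he => (Finset.mem_filter.mp (htsub he)).2
      have hgb := graph_bound h2 hr t (Finset.nonempty_iff_ne_empty.mpr htne) htlt
      rw [hH]
      dsimp only
      simp only [hv]
      rw [show 2 * (q ^ m * Real.sqrt q / q) = (2 * q ^ m * Real.sqrt q) / q by ring]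
      rw [le_div_iff₀ hq0, mul_comm]
      exact hgb
    rw [hAeq]
    have h0 : ∑ t ∈ E.powerset, H t = H ∅ + ∑ t ∈ E.powerset.erase ∅, H t := by
      rw [← Finset.sum_erase_add E.powerset H (Finset.empty_mem_powerset E)]
      ring
    rw [h0, hHempty]
    have h2K : (0:ℝ) < 2 ^ K := by positivity
    rw [show (q ^ m + ∑ t ∈ E.powerset.erase ∅, H t) / 2 ^ K - q ^ m / 2 ^ K
        = (∑ t ∈ E.powerset.erase ∅, H t) / 2 ^ K by ring]
    rw [abs_div, abs_of_pos h2K, div_le_iff₀ h2K]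
    calc |∑ t ∈ E.powerset.erase ∅, H t| ≤ ∑ t ∈ E.powerset.erase ∅, |H t| :=
          Finset.abs_sum_le_sum_abs _ _
      _ ≤ ∑ _t ∈ E.powerset.erase ∅, 2 * (q ^ m * Real.sqrt q / q) :=
          Finset.sum_le_sum hHbound
      _ = (E.powerset.erase ∅).card * (2 * (q ^ m * Real.sqrt q / q)) := by
          rw [Finset.sum_const, nsmul_eq_mul]
      _ ≤ 2 ^ K * (2 * (q ^ m * Real.sqrt q / q)) := by
          apply mul_le_mul_of_nonneg_right _ (by positivity)
          have : (E.powerset.erase ∅).card ≤ E.powerset.card :=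
            Finset.card_le_card (Finset.erase_subset _ _)
          rw [Finset.card_powerset] at this
          calc ((E.powerset.erase ∅).card : ℝ) ≤ ((2:ℕ) ^ K : ℕ) := by exact_mod_cast this
            _ = 2 ^ K := by push_cast; ring
      _ = 2 * (q ^ m * Real.sqrt q / q) * 2 ^ K := by ring
  -- Final combination
  have hpow : q ^ ((m:ℝ) - 1/2) = q ^ m * Real.sqrt q / q := by
    rw [show (m:ℝ) - 1/2 = (m:ℝ) + (1/2) + (-1) by ring]
    rw [Real.rpow_add hq0, Real.rpow_add hq0, Real.rpow_natCast, Real.rpow_neg_one]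
    rw [← Real.sqrt_eq_rpow]
    field_simp
  have hKle : K ≤ m * m := by
    rw [← hKval]
    calc m * (m - 1) / 2 ≤ m * (m - 1) := Nat.div_le_self _ _
      _ ≤ m * m := Nat.mul_le_mul_left _ (Nat.sub_le m 1)
  rw [hKval, hpow]
  calc |((Nat.card {a : Fin m → F // P a} : ℕ) : ℝ) - q ^ m / 2 ^ K|
      ≤ |((Nat.card {a : Fin m → F // P a} : ℕ) : ℝ) - A| + |A - q ^ m / 2 ^ K| :=
        abs_sub_le _ _ _
    _ ≤ 2 ^ K * (q ^ m / q) + 2 * (q ^ m * Real.sqrt q / q) := by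
        apply add_le_add _ main2
        rw [hcount]
        exact main1
    _ ≤ 2 ^ K * (q ^ m * Real.sqrt q / q) + 2 * (q ^ m * Real.sqrt q / q) := by
        refine add_le_add ?_ le_rfl
        apply mul_le_mul_of_nonneg_left _ (by positivity)
        exact (div_le_div_iff_of_pos_right hq0).mpr
          (le_mul_of_one_le_right (by positivity) hsq1)
    _ = ((2:ℝ) ^ K + 2) * (q ^ m * Real.sqrt q / q) := by ring
    _ ≤ ((2:ℝ) ^ (m * m) + 2) * (q ^ m * Real.sqrt q / q) := by
        apply mul_le_mul_of_nonneg_right _ (by positivity)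
        refine add_le_add ?_ le_rfl
        exact pow_le_pow_right₀ (by norm_num) hKle
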